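/- Infinite dual Nullstellensatz (classical): let K be an algebraically closed field and F_1, …, F_s ∈ K[X_1, …, X_n]. Then the system F_1 = ⋯ = F_s = 0 has a solution in K^n if and only if there exists a function y from the set of multi-indices ℕ^n to K with y(0) ≠ 0 such that for every multi-index I ∈ ℕ^n and every j ∈ {1, …, s} the (finite) sum over all multi-indices J of coeff_J(X^I · F_j) · y(J) equals 0, where coeff_J denotes the coefficient of the monomial X^J. -/

import Mathlib

open MvPolynomial

noncomputable def dualPhi {K : Type*} [CommSemiring K] {n : ℕ} (y : (Fin n →₀ ℕ) → K) :
    MvPolynomial (Fin n) K →ₗ[K] K where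
  toFun p := ∑ J ∈ p.support, coeff J p * y J
  map_add' p q := by
    show Finsupp.sum (AddMonoidAlgebra.coeff p + AddMonoidAlgebra.coeff q) (fun J c => c * y J) =
      Finsupp.sum (AddMonoidAlgebra.coeff p) (fun J c => c * y J) +
        Finsupp.sum (AddMonoidAlgebra.coeff q) (fun J c => c * y J)
    exact Finsupp.sum_add_index' (fun a => zero_mul _) (fun a b₁ b₂ => add_mul _ _ _)
  map_smul' c p := by
    simp only [RingHom.id_apply, smul_eq_mul]
    rw [Finset.sum_subset (MvPolynomial.support_smul (a := c) (f := p)), Finset.mul_sum]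
    · exact Finset.sum_congr rfl fun J _ => by rw [coeff_smul, smul_eq_mul, mul_assoc]
    · intro J _ hJ
      rw [notMem_support_iff.mp hJ, zero_mul]

theorem dualPhi_apply {K : Type*} [CommSemiring K] {n : ℕ} (y : (Fin n →₀ ℕ) → K)
    (p : MvPolynomial (Fin n) K) :
    dualPhi y p = ∑ J ∈ p.support, coeff J p * y J := rfl

/-- Infinite dual Nullstellensatz (classical): over an algebraically closed
field `K`, the system `F₁ = ⋯ = F_s = 0` has a solution in `Kⁿ` iff there is a
function `y` on multi-indices with `y 0 ≠ 0` such that for every multi-index `I`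
and every `j`, the sum over the support of `X^I · F j` of
`coeff J (X^I · F j) · y J` vanishes. -/
theorem infinite_dual_nullstellensatz
    (K : Type*) [Field K] [IsAlgClosed K] (n s : ℕ)
    (F : Fin s → MvPolynomial (Fin n) K) :
    (∃ x : Fin n → K, ∀ j : Fin s, eval x (F j) = 0) ↔
      (∃ y : (Fin n →₀ ℕ) → K, y 0 ≠ 0 ∧
        ∀ I : Fin n →₀ ℕ, ∀ j : Fin s,
          ∑ J ∈ (monomial I (1 : K) * F j).support,
            coeff J (monomial I (1 : K) * F j) * y J = 0) := by
  constructor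
  · rintro ⟨x, hx⟩
    refine ⟨fun J => ∏ i, x i ^ J i, by simp, fun I j => ?_⟩
    have : ∑ J ∈ (monomial I (1 : K) * F j).support,
        coeff J (monomial I (1 : K) * F j) * ∏ i, x i ^ J i
        = eval x (monomial I (1 : K) * F j) := (eval_eq' x _).symm
    rw [this, map_mul, hx j, mul_zero]
  · rintro ⟨y, hy0, hy⟩
    set Jd : Ideal (MvPolynomial (Fin n) K) := Ideal.span (Set.range F) with hJd
    have key : ∀ q : MvPolynomial (Fin n) K, ∀ j : Fin s, dualPhi y (q * F j) = 0 := by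
      intro q j
      conv_lhs => rw [q.as_sum, Finset.sum_mul]
      rw [map_sum]
      refine Finset.sum_eq_zero fun v _ => ?_
      have hmono : (monomial v (coeff v q) : MvPolynomial (Fin n) K)
          = coeff v q • monomial v (1 : K) := by
        rw [smul_monomial, smul_eq_mul, mul_one]
      rw [hmono, smul_mul_assoc, map_smul, smul_eq_mul]
      rw [dualPhi_apply, hy v j, mul_zero]
    have hmem : ∀ p ∈ Jd, dualPhi y p = 0 := by
      intro p hp
      obtain ⟨c, rfl⟩ := (Submodule.mem_span_range_iff_exists_fun (MvPolynomial (Fin n) K)).mp hp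
      rw [map_sum]
      refine Finset.sum_eq_zero fun j _ => ?_
      rw [smul_eq_mul]
      exact key (c j) j
    have hone : dualPhi y 1 = y 0 := by
      classical
      rw [show (1 : MvPolynomial (Fin n) K) = monomial 0 1 by simp, dualPhi_apply,
        support_monomial]
      simp
    have hne : Jd ≠ ⊤ := by
      intro h
      exact hy0 (by rw [← hone]; exact hmem 1 (h ▸ Submodule.mem_top))
    have hrad : Jd.radical ≠ ⊤ := fun h => hne (Ideal.radical_eq_top.mp h)
    have hvan := MvPolynomial.vanishingIdeal_zeroLocus_eq_radical (K := K) Jd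
    have hnonempty : (MvPolynomial.zeroLocus K Jd).Nonempty := by
      by_contra h
      rw [Set.not_nonempty_iff_eq_empty] at h
      apply hrad
      rw [← hvan, h]
      ext p
      simp [MvPolynomial.mem_vanishingIdeal_iff]
    obtain ⟨x, hx⟩ := hnonempty
    exact ⟨x, fun j => by
      simpa [MvPolynomial.coe_aeval_eq_eval] using (MvPolynomial.mem_zeroLocus_iff.mp hx) (F j)
        (Ideal.subset_span ⟨j, rfl⟩)⟩
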